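/- For all natural numbers n and k with 0 ≤ k ≤ n, φ(n,k,k) = 1 / (2^n · (n−k)! · k! · 3^k). -/
import Mathlib


/-- Auxiliary array realizing the triangular field `φ` on natural-number indices. -/
def phiN : ℕ → ℕ → ℕ → ℚ
  | 0, j, k => if j = 0 ∧ k = 0 then 1 else 0
  | n + 1, j, k =>
    if k ≤ j ∧ j ≤ n + 1 then
      ((if _hk : k = 0 then 0 else ((n : ℚ) + 2 - (j : ℚ)) * phiN (n + 1) (j - 1) (k - 1))
        + ((k : ℚ) + 1) * phiN n j (k + 1) + phiN n j k) / (2 * ((n : ℚ) + 1) + (k : ℚ))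
    else 0
termination_by n j k => (n, j)


lemma phiN_zero {n j k : ℕ} (h : ¬(k ≤ j ∧ j ≤ n)) : phiN n j k = 0 := by
  cases n with
  | zero =>
    rw [phiN]
    rw [if_neg]
    rintro ⟨rfl, rfl⟩
    exact h ⟨le_rfl, le_rfl⟩
  | succ n => rw [phiN, if_neg h]

example : phiN 0 0 0 = 1 := by rw [phiN]; simp

lemma phiN_succ (n j k : ℕ) (h : k ≤ j ∧ j ≤ n + 1) :
    phiN (n+1) j k =
      ((if _hk : k = 0 then 0 else ((n : ℚ) + 2 - (j : ℚ)) * phiN (n + 1) (j - 1) (k - 1))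
        + ((k : ℚ) + 1) * phiN n j (k + 1) + phiN n j k) / (2 * ((n : ℚ) + 1) + (k : ℚ)) := by
  rw [phiN, if_pos h]

lemma key : ∀ n k : ℕ, k ≤ n → phiN n k k
    = 1 / (2 ^ n * (Nat.factorial (n - k) : ℚ) * (Nat.factorial k : ℚ) * 3 ^ k) := by
  intro n
  induction n with
  | zero =>
    intro k hk
    interval_cases k
    rw [phiN]; simp [Nat.factorial]
  | succ n ih =>
    intro k
    induction k with
    | zero =>
      intro _
      rw [phiN_succ n 0 0 ⟨le_rfl, Nat.zero_le _⟩]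
      rw [phiN_zero (by omega : ¬(1 ≤ 0 ∧ 0 ≤ n)), ih 0 (Nat.zero_le _)]
      simp only [Nat.sub_zero, Nat.factorial_succ, Nat.factorial_zero]
      have h2 : (2:ℚ)^n ≠ 0 := by positivity
      have h3 : ((n.factorial : ℚ)) ≠ 0 := Nat.cast_ne_zero.mpr n.factorial_pos.ne'
      have h4 : (2 * ((n:ℚ)+1) + 0) ≠ 0 := by positivity
      push_cast
      field_simp
      ring
    | succ k ihk =>
      intro hk
      rw [phiN_succ n (k+1) (k+1) ⟨le_rfl, hk⟩]
      rw [dif_neg (by omega : ¬(k+1 = 0))]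
      rw [phiN_zero (by omega : ¬(k+2 ≤ k+1 ∧ k+1 ≤ n))]
      have hkk : phiN (n+1) ((k+1)-1) ((k+1)-1) = phiN (n+1) k k := by norm_num
      rw [hkk, ihk (by omega)]
      rcases Nat.lt_or_ge k n with hlt | hge
      · -- k + 1 ≤ n
        rw [ih (k+1) hlt]
        obtain ⟨m, rfl⟩ : ∃ m, n = k + 1 + m := ⟨n - (k+1), by omega⟩
        have e1 : k + 1 + m + 1 - k = m + 2 := by omega
        have e2 : k + 1 + m - (k + 1) = m := by omega
        have e3 : k + 1 + m + 1 - (k + 1) = m + 1 := by omega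
        rw [e1, e2, e3]
        have h2 : (2:ℚ)^(k+1+m) ≠ 0 := by positivity
        have hm : ((m.factorial : ℚ)) ≠ 0 := Nat.cast_ne_zero.mpr m.factorial_pos.ne'
        have hkf : ((k.factorial : ℚ)) ≠ 0 := Nat.cast_ne_zero.mpr k.factorial_pos.ne'
        simp only [Nat.factorial_succ]
        push_cast
        have hden : (2 * ((k:ℚ) + 1 + m + 1) + (k + 1)) ≠ 0 := by positivity
        field_simp
        ring
      · -- k = n
        have : k = n := le_antisymm (by omega) hge
        subst this
        rw [phiN_zero (by omega : ¬(k+1 ≤ k+1 ∧ k+1 ≤ k))]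
        have e1 : k + 1 - k = 1 := by omega
        have e2 : k + 1 - (k+1) = 0 := by omega
        rw [e1, e2]
        simp only [Nat.factorial_succ, Nat.factorial_one, Nat.factorial_zero]
        have h2 : (2:ℚ)^(k+1) ≠ 0 := by positivity
        have hkf : ((k.factorial : ℚ)) ≠ 0 := Nat.cast_ne_zero.mpr k.factorial_pos.ne'
        push_cast
        have hden : (2 * ((k:ℚ) + 1) + (k + 1)) ≠ 0 := by positivity
        field_simp
        ring

/-- The triangular field `φ(n,j,k)` of rational numbers: `φ(n,j,k) = 0` unless
`0 ≤ k ≤ j ≤ n`, `φ(0,0,0) = 1`, and for `0 ≤ k ≤ j ≤ n` with `(n,j,k) ≠ (0,0,0)`,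
`(2n+k)·φ(n,j,k) = (n-j+1)·φ(n,j-1,k-1) + (k+1)·φ(n-1,j,k+1) + φ(n-1,j,k)`. -/
def phi (n j k : ℤ) : ℚ :=
  if 0 ≤ n ∧ 0 ≤ j ∧ 0 ≤ k then phiN n.toNat j.toNat k.toNat else 0

/-- `φ(n,k,k) = 1 / (2^n · (n-k)! · k! · 3^k)` for `0 ≤ k ≤ n`. -/
theorem stmt11 (n k : ℕ) (hk : k ≤ n) :
    phi (n : ℤ) (k : ℤ) (k : ℤ)
      = 1 / (2 ^ n * (Nat.factorial (n - k) : ℚ) * (Nat.factorial k : ℚ) * 3 ^ k) := by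
  simp only [phi, Int.toNat_natCast]
  rw [if_pos ⟨Int.natCast_nonneg n, Int.natCast_nonneg k, Int.natCast_nonneg k⟩]
  exact key n k hk
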